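/- arXiv:2209.14524 — 3 statements merged into one kernel-verified Lean document; each statement's English description precedes it below -/
import Mathlib

section
/- Let t be a positive integer. If M is a matroid with the (1,2,t,2t)-property and |E(M)| ≥ t, then M is a (1,t)-spike. -/
open Set Function

namespace Matroid

variable {α : Type*}

/-- A circuit of a matroid: a minimal dependent set. -/
def IsCircuit' (M : Matroid α) (C : Set α) : Prop := Minimal M.Dep C

/-- A cocircuit of a matroid: a circuit of the dual matroid. -/
def IsCocircuit' (M : Matroid α) (C : Set α) : Prop := M✶.IsCircuit' C

/-- The `ℕ`-valued rank of a set `X` in a matroid `M`: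
the size of a largest independent subset of `X`. -/
noncomputable def rk' (M : Matroid α) (X : Set α) : ℕ :=
  sSup {n : ℕ | ∃ I, M.Indep I ∧ I ⊆ X ∧ I.ncard = n}

/-- The connectivity function `λ(X) = r(X) + r(E − X) − r(M)`. -/
noncomputable def lam' (M : Matroid α) (X : Set α) : ℕ :=
  M.rk' X + M.rk' (M.E \ X) - M.rk' M.E

/-- The `(s,u,t,v)`-property: every `s`-element subset of the ground set is contained in a
circuit of size `u`, and every `t`-element subset is contained in a cocircuit of size `v`. -/
def HasProp (M : Matroid α) (s u t v : ℕ) : Prop :=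
  (∀ S ⊆ M.E, S.ncard = s → ∃ C, M.IsCircuit' C ∧ C.ncard = u ∧ S ⊆ C) ∧
  (∀ T ⊆ M.E, T.ncard = t → ∃ C, M.IsCocircuit' C ∧ C.ncard = v ∧ T ⊆ C)

/-- A `t`-echidna of order `n`: a family of `n` pairwise disjoint `2`-element subsets of the
ground set (spines) such that the union of any `t` spines is a circuit.
(A `t`-coechidna of `M` is a `t`-echidna of `M✶`.) -/
def IsEchidna (M : Matroid α) (t : ℕ) {n : ℕ} (S : Fin n → Set α) : Prop :=
  (∀ i, S i ⊆ M.E) ∧ (∀ i, (S i).ncard = 2) ∧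
  Pairwise (Function.onFun Disjoint S) ∧
  ∀ I : Finset (Fin n), I.card = t → M.IsCircuit' (⋃ i ∈ I, S i)

/-- `M` is an `(s,t)`-spike with associated partition `(A 1, …, A m)`: the `A i` are `m`
pairwise disjoint pairs partitioning the ground set, with `m ≥ max s t`, such that the union of
any `s` pairs is a circuit and the union of any `t` pairs is a cocircuit. -/
def IsSpike (M : Matroid α) (s t : ℕ) {m : ℕ} (A : Fin m → Set α) : Prop :=
  max s t ≤ m ∧ (⋃ i, A i) = M.E ∧
  Pairwise (Function.onFun Disjoint A) ∧ (∀ i, (A i).ncard = 2) ∧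
  (∀ I : Finset (Fin m), I.card = s → M.IsCircuit' (⋃ i ∈ I, A i)) ∧
  (∀ I : Finset (Fin m), I.card = t → M.IsCocircuit' (⋃ i ∈ I, A i))

end Matroid

namespace Matroid

variable {α : Type*}

variable {M : Matroid α} {C D K : Set α} {a b c e f : α}

lemma IsCircuit'.dep (h : M.IsCircuit' C) : M.Dep C := h.1

lemma IsCircuit'.subset_ground (h : M.IsCircuit' C) : C ⊆ M.E := h.1.subset_ground

lemma IsCircuit'.ssubset_indep (h : M.IsCircuit' C) (hD : D ⊂ C) : M.Indep D := by
  rw [← not_dep_iff (hD.subset.trans h.subset_ground)]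
  exact fun hd => hD.ne (hD.subset.antisymm (h.2 hd hD.subset))

lemma IsCircuit'.mem_closure (h : M.IsCircuit' C) (he : e ∈ C) :
    e ∈ M.closure (C \ {e}) := by
  have hI : M.Indep (C \ {e}) := h.ssubset_indep (sdiff_singleton_ssubset.2 he)
  by_contra hcl
  have := (hI.insert_indep_iff_of_notMem (by simp)).2 ⟨h.subset_ground he, hcl⟩
  rw [insert_diff_singleton, insert_eq_of_mem he] at this
  exact h.dep.not_indep this

lemma IsCocircuit'.subset_ground (h : M.IsCocircuit' K) : K ⊆ M.E :=
  h.1.subset_ground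

lemma circuit_cocircuit (hK : M.IsCocircuit' K) (hC : M.IsCircuit' C) (haC : a ∈ C)
    (haK : a ∈ K) (h : ∀ x ∈ C, x ≠ a → x ∉ K) : False := by
  have hKE : K ⊆ M.E := hK.subset_ground
  have haE : a ∈ M.E := hKE haK
  have hns : ¬ M.Spanning (M.E \ K) := by
    rw [← coindep_iff_compl_spanning]
    exact fun hco => hK.dep.not_indep hco
  have hind : M✶.Indep (K \ {a}) := hK.ssubset_indep (sdiff_singleton_ssubset.2 haK)
  have hsp : M.Spanning (M.E \ (K \ {a})) := by
    rw [← coindep_iff_compl_spanning]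
    exact hind
  have hCdiff : C \ {a} ⊆ M.E \ K := fun x hx =>
    ⟨hC.subset_ground hx.1, h x hx.1 hx.2⟩
  have hacl : a ∈ M.closure (M.E \ K) :=
    M.closure_subset_closure hCdiff (hC.mem_closure haC)
  have hEeq : M.E \ (K \ {a}) = insert a (M.E \ K) := by
    rw [diff_diff_right, inter_eq_self_of_subset_right (singleton_subset_iff.2 haE),
      union_comm, singleton_union]
  rw [hEeq, spanning_iff_closure_eq, closure_insert_eq_of_mem_closure hacl,
    ← spanning_iff_closure_eq] at hsp
  exact hns hsp


lemma IsCocircuit'.mem_of_pair (hK : M.IsCocircuit' K) (hC : M.IsCircuit' {a, b})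
    (hab : a ≠ b) (haK : a ∈ K) : b ∈ K := by
  by_contra hb
  refine circuit_cocircuit hK hC (mem_insert a _) haK fun x hx hxa => ?_
  rcases hx with rfl | hx
  · exact absurd rfl hxa
  · rw [mem_singleton_iff] at hx; subst hx; exact hb

/-- `a` and `b` are parallel: distinct elements forming a 2-element circuit. -/
def Para (M : Matroid α) (a b : α) : Prop := a ≠ b ∧ M.IsCircuit' {a, b}

lemma Para.ne (h : M.Para a b) : a ≠ b := h.1

lemma Para.circuit (h : M.Para a b) : M.IsCircuit' {a, b} := h.2

lemma Para.symm (h : M.Para a b) : M.Para b a := ⟨h.1.symm, pair_comm a b ▸ h.2⟩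

lemma Para.mem_ground_left (h : M.Para a b) : a ∈ M.E :=
  h.circuit.subset_ground (mem_insert a _)

lemma Para.mem_ground_right (h : M.Para a b) : b ∈ M.E :=
  h.symm.mem_ground_left

lemma Para.indep_left (h : M.Para a b) : M.Indep {a} :=
  h.circuit.ssubset_indep (by
    rw [ssubset_iff_of_subset (singleton_subset_iff.2 (mem_insert a _))]
    exact ⟨b, mem_insert_of_mem _ rfl, by simpa using h.ne.symm⟩)

lemma Para.mem_closure (h : M.Para a b) : a ∈ M.closure {b} := by
  have := h.circuit.mem_closure (mem_insert a _)
  rwa [show ({a, b} : Set α) \ {a} = {b} from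
    insert_diff_self_of_notMem (by simpa using h.ne)] at this

lemma pair_circuit_of_dep (hab : a ≠ b) (hia : M.Indep {a}) (hib : M.Indep {b})
    (hd : M.Dep {a, b}) : M.IsCircuit' {a, b} := by
  refine ⟨hd, fun D hD hDsub => ?_⟩
  have haD : a ∈ D := by
    by_contra haD
    have : D ⊆ {b} := fun x hx => by
      rcases hDsub hx with rfl | hx
      · exact absurd hx haD
      · exact hx
    exact hD.not_indep (hib.subset this)
  have hbD : b ∈ D := by
    by_contra hbD
    have : D ⊆ {a} := fun x hx => by
      rcases hDsub hx with rfl | hx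
      · exact mem_singleton _
      · rw [mem_singleton_iff] at hx; subst hx; exact absurd hx hbD
    exact hD.not_indep (hia.subset this)
  exact insert_subset haD (singleton_subset_iff.2 hbD)

lemma para_of_mem_closure (hab : a ≠ b) (hia : M.Indep {a}) (hib : M.Indep {b})
    (hacl : a ∈ M.closure {b}) : M.Para a b := by
  have hd : M.Dep {a, b} := by
    have := hib.insert_dep_iff (e := a)
    rw [show insert a ({b} : Set α) = {a, b} from rfl] at this
    exact this.2 ⟨hacl, by simpa using hab⟩
  exact ⟨hab, pair_circuit_of_dep hab hia hib hd⟩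

lemma Para.trans' (h1 : M.Para a b) (h2 : M.Para b c) (hac : a ≠ c) : M.Para a c := by
  have hacl : a ∈ M.closure {c} :=
    closure_subset_closure_of_subset_closure
      (singleton_subset_iff.2 h2.mem_closure) h1.mem_closure
  exact para_of_mem_closure hac h1.indep_left h2.symm.indep_left hacl


lemma ncard_biUnion_pairs {ι : Type*} [DecidableEq ι] (I : Finset ι) (A : ι → Set α)
    (hfin : ∀ i ∈ I, (A i).Finite) (h2 : ∀ i ∈ I, (A i).ncard = 2)
    (hd : (I : Set ι).Pairwise (Function.onFun Disjoint A)) :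
    (⋃ i ∈ I, A i).ncard = 2 * I.card := by
  classical
  induction I using Finset.induction with
  | empty => simp
  | insert j s hnot ih =>
    rw [Finset.set_biUnion_insert]
    have hdisj : Disjoint (A j) (⋃ i ∈ s, A i) := by
      rw [disjoint_iUnion₂_right]
      intro i hi
      exact hd (by simp) (by simp; exact Or.inr (Finset.mem_coe.1 hi)) (by rintro rfl; exact hnot hi)
    have hfinU : (⋃ i ∈ s, A i).Finite :=
      Set.Finite.biUnion s.finite_toSet fun i hi => hfin i (by simp [Finset.mem_coe.1 hi])
    rw [ncard_union_eq hdisj (hfin j (by simp)) hfinU,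
      h2 j (by simp), ih (fun i hi => hfin i (by simp [hi])) (fun i hi => h2 i (by simp [hi]))
        (hd.mono (by simp))]
    rw [Finset.card_insert_of_notMem hnot]
    ring

lemma pair_partition (Inv : Set α → Prop) (Good : Set α → Prop)
    (S : Set α) (hS : S.Finite) (h0 : Inv S)
    (hstep : ∀ T, T ⊆ S → Inv T → T.Nonempty →
      ∃ P, P ⊆ T ∧ P.ncard = 2 ∧ Good P ∧ Inv (T \ P)) :
    ∃ (m : ℕ) (A : Fin m → Set α), (∀ i, Good (A i) ∧ (A i).ncard = 2) ∧
      Pairwise (Function.onFun Disjoint A) ∧ (⋃ i, A i) = S := by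
  suffices h : ∀ (n : ℕ) (S' : Set α), S' ⊆ S → S'.ncard = n → Inv S' →
      ∃ (m : ℕ) (A : Fin m → Set α), (∀ i, Good (A i) ∧ (A i).ncard = 2) ∧
        Pairwise (Function.onFun Disjoint A) ∧ (⋃ i, A i) = S' by
    exact h S.ncard S Subset.rfl rfl h0
  intro n
  induction n using Nat.strong_induction_on with
  | _ n ih =>
    intro S' hsub hcard hinv
    rcases S'.eq_empty_or_nonempty with rfl | hne
    · exact ⟨0, Fin.elim0, fun i => i.elim0, by
        intro i; exact i.elim0, by simp⟩
    obtain ⟨P, hPT, hP2, hPg, hPinv⟩ := hstep S' hsub hinv hne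
    have hS'fin : S'.Finite := hS.subset hsub
    have hpos : 0 < n := by
      rw [← hcard]
      exact Set.ncard_pos hS'fin |>.2 hne
    have hlt : (S' \ P).ncard < n := by
      rw [Set.ncard_diff hPT (hS'fin.subset hPT), hcard, hP2]
      omega
    obtain ⟨m, A, hA, hdisj, hun⟩ :=
      ih _ hlt (S' \ P) (diff_subset.trans hsub) rfl hPinv
    refine ⟨m + 1, Fin.cons P A, ?_, ?_, ?_⟩
    · intro i
      refine Fin.cases ?_ ?_ i
      · simpa using ⟨hPg, hP2⟩
      · intro j; simpa using hA j
    · have hPA : ∀ j, Disjoint P (A j) := by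
        intro j
        have : A j ⊆ S' \ P := hun ▸ subset_iUnion A j
        exact (disjoint_sdiff_right.mono_right this)
      intro i j hij
      obtain rfl | ⟨i', rfl⟩ := i.eq_zero_or_eq_succ <;>
        obtain rfl | ⟨j', rfl⟩ := j.eq_zero_or_eq_succ
      · exact absurd rfl hij
      · simpa [Function.onFun] using hPA j'
      · simpa [Function.onFun] using (hPA i').symm
      · have hne' : i' ≠ j' := by
          rintro rfl; exact hij rfl
        simpa [Function.onFun, Fin.cons_succ] using hdisj hne'
    · have hcons : (⋃ i, (Fin.cons P A : Fin (m + 1) → Set α) i) = P ∪ ⋃ i, A i := by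
        ext x
        simp [mem_iUnion, Fin.exists_fin_succ]
      rw [hcons, hun, union_diff_cancel hPT]


end Matroid

section Main

open Matroid

variable {α : Type*} {M : Matroid α}

theorem main_statement (t : ℕ) (ht : 0 < t)
    (M : Matroid α) (hE : M.E.Finite)
    (hcirc : ∀ S ⊆ M.E, S.ncard = 1 → ∃ C, M.IsCircuit' C ∧ C.ncard = 2 ∧ S ⊆ C)
    (hcocirc : ∀ T ⊆ M.E, T.ncard = t → ∃ C, M.IsCocircuit' C ∧ C.ncard = 2 * t ∧ T ⊆ C)
    (hcard : t ≤ M.E.ncard) :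
    ∃ (m : ℕ) (A : Fin m → Set α),
      (max 1 t ≤ m ∧ (⋃ i, A i) = M.E ∧
      Pairwise (Function.onFun Disjoint A) ∧ (∀ i, (A i).ncard = 2) ∧
      (∀ I : Finset (Fin m), I.card = 1 → M.IsCircuit' (⋃ i ∈ I, A i)) ∧
      (∀ I : Finset (Fin m), I.card = t → M.IsCocircuit' (⋃ i ∈ I, A i))) := by
  classical
  have hpart : ∀ e ∈ M.E, ∃ f, M.Para e f := by
    intro e he
    obtain ⟨C, hC, hC2, heC⟩ := hcirc {e} (Set.singleton_subset_iff.2 he) (Set.ncard_singleton e)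
    obtain ⟨x, y, hxy, rfl⟩ := Set.ncard_eq_two.1 hC2
    rcases (heC rfl : e ∈ ({x, y} : Set α)) with rfl | h
    · exact ⟨y, hxy, hC⟩
    · rw [Set.mem_singleton_iff] at h; subst h
      exact ⟨x, hxy.symm, Set.pair_comm x e ▸ hC⟩
  have hps : ∀ e, ∃ f, e ∈ M.E → M.Para e f := by
    intro e
    by_cases he : e ∈ M.E
    · obtain ⟨f, hf⟩ := hpart e he; exact ⟨f, fun _ => hf⟩
    · exact ⟨e, fun h => absurd h he⟩
  choose p hp using hps
  -- STEP 1 : a partition of the ground set into circuit-pairs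
  have hpartition : ∃ (m : ℕ) (A : Fin m → Set α),
      (∀ i, M.IsCircuit' (A i) ∧ (A i).ncard = 2) ∧
      Pairwise (Function.onFun Disjoint A) ∧ (⋃ i, A i) = M.E := by
    by_cases huniq : ∀ x y z : α, M.Para x y → M.Para x z → y = z
    · -- unique partners : pair each element with its partner
      refine pair_partition (fun T => T ⊆ M.E ∧ ∀ x ∈ T, p x ∈ T) M.IsCircuit' M.E hE
        ⟨Subset.rfl, fun x hx => (hp x hx).mem_ground_right⟩ ?_
      rintro T hTsub ⟨hTE, hTcl⟩ ⟨e, heT⟩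
      have hPe := hp e (hTE heT)
      refine ⟨{e, p e}, Set.insert_subset heT (Set.singleton_subset_iff.2 (hTcl e heT)),
        Set.ncard_pair hPe.ne, hPe.circuit, diff_subset.trans hTE, ?_⟩
      intro x hx
      have hPx := hp x (hTE hx.1)
      refine ⟨hTcl x hx.1, ?_⟩
      rintro (h | h)
      · -- p x = e
        apply hx.2
        have : x = p e := huniq e x (p e) ((h ▸ hPx).symm) hPe
        exact this ▸ Set.mem_insert_of_mem _ rfl
      · -- p x = p e
        rw [Set.mem_singleton_iff] at h
        apply hx.2
        have : x = e := huniq (p x) x e hPx.symm (h ▸ hPe.symm)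
        exact this ▸ Set.mem_insert _ _
    · -- some element has two partners
      push_neg at huniq
      obtain ⟨a, b, c, hab, hac, hbc⟩ := huniq
      have haE := hab.mem_ground_left
      have claim1 : ∀ T, T ⊆ M.E → a ∈ T →
          (∀ x ∈ T, ∀ y ∈ T, x ≠ y → ¬ M.Para x y) → T.ncard ≠ t := by
        intro T hTsub haT hpw hTt
        obtain ⟨K, hK, hK2, hTK⟩ := hcocirc T hTsub hTt
        have hTfin := hE.subset hTsub
        have hpK : ∀ x ∈ T, p x ∈ K := fun x hx =>
          hK.mem_of_pair (hp x (hTsub hx)).circuit (hp x (hTsub hx)).ne (hTK hx)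
        have hdisjT : Disjoint T (p '' T) := by
          rw [Set.disjoint_right]
          rintro y ⟨x, hxT, rfl⟩ hyT
          exact hpw x hxT (p x) hyT (hp x (hTsub hxT)).ne (hp x (hTsub hxT))
        have hinjp : Set.InjOn p T := by
          intro x hx y hy hpxy
          by_contra hne
          have h1 := hp x (hTsub hx)
          have h2 := (hp y (hTsub hy)).symm
          rw [hpxy] at h1
          exact hpw x hx y hy hne (h1.trans' h2 hne)
        have hcardU : (T ∪ p '' T).ncard = 2 * t := by
          rw [Set.ncard_union_eq hdisjT hTfin (hTfin.image p),
            Set.ncard_image_of_injOn hinjp, hTt]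
          ring
        have hUK : T ∪ p '' T ⊆ K := by
          refine Set.union_subset hTK ?_
          rintro y ⟨x, hx, rfl⟩
          exact hpK x hx
        have hKeq : T ∪ p '' T = K :=
          Set.eq_of_subset_of_ncard_le hUK (by rw [hK2, hcardU])
            (hE.subset hK.subset_ground)
        have key : ∀ z, M.Para a z → z = p a := by
          intro z hz
          have hzK : z ∈ K := hK.mem_of_pair hz.circuit hz.ne (hTK haT)
          rw [← hKeq] at hzK
          rcases hzK with hzT | ⟨x, hxT, rfl⟩
          · exact absurd hz (hpw a haT z hzT hz.ne)
          · by_cases hxa : x = a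
            · rw [hxa]
            · exfalso
              have h1 := hp x (hTsub hxT)
              exact hpw x hxT a haT hxa (h1.trans' hz.symm hxa)
        exact hbc ((key b hab).trans (key c hac).symm)
      set 𝒮 := {T : Set α | a ∈ T ∧ T ⊆ M.E ∧ ∀ x ∈ T, ∀ y ∈ T, x ≠ y → ¬ M.Para x y}
        with h𝒮
      have h𝒮fin : 𝒮.Finite := hE.finite_subsets.subset fun T hT => hT.2.1
      have h𝒮ne : 𝒮.Nonempty := by
        refine ⟨{a}, rfl, Set.singleton_subset_iff.2 haE, ?_⟩
        intro x hx y hy hxy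
        rw [Set.mem_singleton_iff] at hx hy
        exact absurd (hx.trans hy.symm) hxy
      obtain ⟨T₀, hT₀S, hT₀max⟩ := Set.Finite.exists_maximalFor Set.ncard 𝒮 h𝒮fin h𝒮ne
      have hT₀fin := hE.subset hT₀S.2.1
      have hcover : ∀ x ∈ M.E, ∃ y ∈ T₀, x = y ∨ M.Para x y := by
        intro x hxE
        by_contra hno
        push_neg at hno
        have hxT₀ : x ∉ T₀ := fun h => (hno x h).1 rfl
        have hins : insert x T₀ ∈ 𝒮 := by
          refine ⟨Set.mem_insert_of_mem _ hT₀S.1,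
            Set.insert_subset hxE hT₀S.2.1, ?_⟩
          intro u hu v hv huv
          rcases hu with rfl | hu <;> rcases hv with rfl | hv
          · exact absurd rfl huv
          · exact (hno v hv).2
          · exact fun hpar => (hno u hu).2 hpar.symm
          · exact hT₀S.2.2 u hu v hv huv
        have hle : T₀.ncard ≤ (insert x T₀).ncard :=
          Set.ncard_le_ncard (Set.subset_insert _ _) (hE.subset hins.2.1)
        have := hT₀max hins hle
        rw [Set.ncard_insert_of_notMem hxT₀ hT₀fin] at this
        omega
      have hlt : T₀.ncard < t := by
        by_contra hge
        push_neg at hge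
        obtain ⟨T', hT'sub, hT'card⟩ := Set.exists_subset_card_eq
          (show t - 1 ≤ (T₀ \ {a}).ncard by
            rw [Set.ncard_diff_singleton_of_mem hT₀S.1]; omega)
        have haT' : a ∉ T' := fun h => (hT'sub h).2 rfl
        have hT'T₀ : insert a T' ⊆ T₀ :=
          Set.insert_subset hT₀S.1 (hT'sub.trans diff_subset)
        refine claim1 (insert a T') (hT'T₀.trans hT₀S.2.1) (Set.mem_insert _ _) ?_ ?_
        · intro x hx y hy hxy
          exact hT₀S.2.2 x (hT'T₀ hx) y (hT'T₀ hy) hxy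
        · rw [Set.ncard_insert_of_notMem haT' (hT₀fin.subset (hT'sub.trans diff_subset)),
            hT'card]
          omega
      obtain ⟨T, hT₀T, hTE, hTcard⟩ :=
        Set.exists_subsuperset_card_eq hT₀S.2.1 hlt.le hcard
      obtain ⟨K, hK, hK2, hTK⟩ := hcocirc T hTE hTcard
      have hKE : K = M.E := by
        refine Subset.antisymm hK.subset_ground fun x hxE => ?_
        obtain ⟨y, hyT₀, hxy⟩ := hcover x hxE
        have hyK : y ∈ K := hTK (hT₀T hyT₀)
        rcases hxy with rfl | hpar
        · exact hyK
        · exact hK.mem_of_pair hpar.symm.circuit hpar.ne.symm hyK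
      have hEcirc : M.IsCocircuit' M.E := hKE ▸ hK
      have hE2t : M.E.ncard = 2 * t := hKE ▸ hK2
      have hspan : ∀ x ∈ M.E, M.Spanning {x} := by
        intro x hxE
        have hind : M✶.Indep (M.E \ {x}) :=
          hEcirc.ssubset_indep (Set.sdiff_singleton_ssubset.2 hxE)
        have hco : M.Coindep (M.E \ {x}) := hind
        have hsp : M.Spanning (M.E \ (M.E \ {x})) := by
          rw [← coindep_iff_compl_spanning]; exact hco
        rwa [Set.diff_diff_cancel_left (Set.singleton_subset_iff.2 hxE)] at hsp
      have pairkey : ∀ x ∈ M.E, ∀ y ∈ M.E, x ≠ y → M.IsCircuit' {x, y} := by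
        intro x hx y hy hxy
        have hycl : x ∈ M.closure {y} := by
          rw [(spanning_iff_closure_eq (Set.singleton_subset_iff.2 hy)).1 (hspan y hy)]
          exact hx
        exact (para_of_mem_closure hxy (hp x hx).indep_left (hp y hy).indep_left
          hycl).circuit
      refine pair_partition (fun T => T ⊆ M.E ∧ Even T.ncard) M.IsCircuit' M.E hE
        ⟨Subset.rfl, by rw [hE2t]; exact even_two_mul t⟩ ?_
      rintro T hTsub ⟨hTE', hTeven⟩ hTne
      have hTfin := hE.subset hTsub
      have h2le : 2 ≤ T.ncard := by
        have h1 := (Set.ncard_pos hTfin).2 hTne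
        obtain ⟨k, hk⟩ := hTeven
        omega
      obtain ⟨x, y, hx, hy, hxy⟩ := (Set.one_lt_ncard_iff hTfin).1 (by omega)
      have hPsub : ({x, y} : Set α) ⊆ T :=
        Set.insert_subset hx (Set.singleton_subset_iff.2 hy)
      refine ⟨{x, y}, hPsub, Set.ncard_pair hxy,
        pairkey x (hTsub hx) y (hTsub hy) hxy, diff_subset.trans hTE', ?_⟩
      rw [Set.ncard_diff hPsub (hTfin.subset hPsub), Set.ncard_pair hxy]
      exact (Nat.even_sub h2le).2 (iff_of_true hTeven (by norm_num))
  -- STEP 2 : assemble the spike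
  obtain ⟨m, A, hA, hdisj, hun⟩ := hpartition
  have hAE : ∀ i, A i ⊆ M.E := fun i => hun ▸ Set.subset_iUnion A i
  have hcardE : M.E.ncard = 2 * m := by
    have hb := ncard_biUnion_pairs (Finset.univ : Finset (Fin m)) A
      (fun i _ => hE.subset (hAE i)) (fun i _ => (hA i).2)
      (hdisj.set_pairwise _)
    rw [show (⋃ i ∈ (Finset.univ : Finset (Fin m)), A i) = ⋃ i, A i by simp, hun] at hb
    simpa using hb
  have h2t : 2 * t ≤ M.E.ncard := by
    obtain ⟨T, hTsub, hTcard⟩ := Set.exists_subset_card_eq hcard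
    obtain ⟨K, hK, hK2, hTK⟩ := hcocirc T hTsub hTcard
    calc 2 * t = K.ncard := hK2.symm
    _ ≤ M.E.ncard := Set.ncard_le_ncard hK.subset_ground hE
  have htm : t ≤ m := by omega
  refine ⟨m, A, ?_, hun, hdisj, fun i => (hA i).2, ?_, ?_⟩
  · rw [max_le_iff]; omega
  · intro I hI1
    obtain ⟨i, rfl⟩ := Finset.card_eq_one.1 hI1
    simpa using (hA i).1
  · intro I hIt
    choose g hg using fun i =>
      (Set.nonempty_of_ncard_ne_zero (by rw [(hA i).2]; norm_num) : (A i).Nonempty)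
    have hinj : Set.InjOn g ↑I := by
      intro i _ j _ hgij
      by_contra hne
      exact Set.disjoint_left.1 (hdisj hne) (hg i) (hgij ▸ hg j)
    have hTsub : g '' ↑I ⊆ M.E := by
      rintro x ⟨i, _, rfl⟩
      exact hAE i (hg i)
    have hTcard : (g '' ↑I).ncard = t := by
      rw [Set.ncard_image_of_injOn hinj, Set.ncard_coe_finset, hIt]
    obtain ⟨K, hK, hK2, hTK⟩ := hcocirc _ hTsub hTcard
    have hsubK : (⋃ i ∈ I, A i) ⊆ K := by
      refine Set.iUnion₂_subset fun i hi => ?_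
      have hgK : g i ∈ K := hTK ⟨i, Finset.mem_coe.2 hi, rfl⟩
      obtain ⟨u, v, huv, hAi⟩ := Set.ncard_eq_two.1 (hA i).2
      rcases (hAi ▸ hg i : g i ∈ ({u, v} : Set α)) with h | h
      · have hAi' : A i = {g i, v} := by rw [hAi, ← h]
        have hne : g i ≠ v := by rw [h]; exact huv
        rw [hAi']
        exact Set.insert_subset hgK (Set.singleton_subset_iff.2
          (hK.mem_of_pair (hAi' ▸ (hA i).1) hne hgK))
      · rw [Set.mem_singleton_iff] at h
        have hAi' : A i = {g i, u} := by rw [hAi, ← h, Set.pair_comm]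
        have hne : g i ≠ u := by rw [h]; exact fun e => huv e.symm
        rw [hAi']
        exact Set.insert_subset hgK (Set.singleton_subset_iff.2
          (hK.mem_of_pair (hAi' ▸ (hA i).1) hne hgK))
    have hcardU : (⋃ i ∈ I, A i).ncard = 2 * t := by
      rw [ncard_biUnion_pairs I A (fun i _ => hE.subset (hAE i))
        (fun i _ => (hA i).2) (hdisj.set_pairwise _), hIt]
    have heq : (⋃ i ∈ I, A i) = K :=
      Set.eq_of_subset_of_ncard_le hsubK (by rw [hK2, hcardU])
        (hE.subset hK.subset_ground)
    rw [heq]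
    exact hK

end Main


universe u

open Matroid

/-- If `M` has the `(1,2,t,2t)`-property and `|E(M)| ≥ t`, then `M` is a
`(1,t)`-spike. -/
theorem statement11 {α : Type u} (t : ℕ) (ht : 0 < t)
    (M : Matroid α) (hE : M.E.Finite) (hM : M.HasProp 1 2 t (2 * t))
    (hcard : t ≤ M.E.ncard) :
    ∃ (m : ℕ) (A : Fin m → Set α), M.IsSpike 1 t A :=
  main_statement t ht M hE hM.1 hM.2 hcard
end

section
/- Let s and t be positive integers, let (A_1,…,A_m) be the associated partition of an (s,t)-spike M, and for J ⊆ [m] let A_J = ⋃_{j∈J} A_j. Then r(A_J) = 2|J| if |J| < s; r(A_J) = s + |J| − 1 if s ≤ |J| ≤ m − t + 1; and r(A_J) = m + s − t if |J| ≥ m − t + 1. -/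
open Set Function

namespace SpikeAux

open Matroid Set Function

variable {α : Type*} {M : Matroid α}

lemma rk'_eq_of {X I : Set α} (hI : M.Indep I) (hIX : I ⊆ X)
    (hub : ∀ I', M.Indep I' → I' ⊆ X → I'.ncard ≤ I.ncard) : M.rk' X = I.ncard := by
  have hmem : I.ncard ∈ {n : ℕ | ∃ I₀, M.Indep I₀ ∧ I₀ ⊆ X ∧ I₀.ncard = n} := ⟨I, hI, hIX, rfl⟩
  apply le_antisymm
  · apply csSup_le ⟨_, hmem⟩
    rintro n ⟨I', h1, h2, rfl⟩
    exact hub I' h1 h2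
  · apply le_csSup ⟨I.ncard, ?_⟩ hmem
    rintro n ⟨I', h1, h2, rfl⟩
    exact hub I' h1 h2

lemma circuit_ssubset_indep {C X : Set α} (hC : M.IsCircuit' C) (hX : X ⊆ C) (hne : X ≠ C) :
    M.Indep X := by
  rw [← not_dep_iff (hX.trans hC.1.subset_ground)]
  intro hdep
  exact hne (hX.antisymm (hC.2 hdep hX))

lemma exists_circuit_of_dep {X : Set α} (hfin : X.Finite) (hX : M.Dep X) :
    ∃ C, C ⊆ X ∧ M.IsCircuit' C := by
  obtain ⟨C, ⟨hCX, hC⟩, hmin⟩ :=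
    Set.Finite.exists_minimalFor id {Y | Y ⊆ X ∧ M.Dep Y}
      (hfin.finite_subsets.subset (fun Y hY => hY.1)) ⟨X, subset_rfl, hX⟩
  refine ⟨C, hCX, hC, fun Y hY hYC => ?_⟩
  have := hmin ⟨hYC.trans hCX, hY⟩ hYC
  simp only [id] at this
  exact this

lemma indep_ncard_le_base {I B : Set α} (hfin : M.E.Finite) (hI : M.Indep I) (hB : M.IsBase B) :
    I.ncard ≤ B.ncard := by
  obtain ⟨B', hB', hIB'⟩ := hI.exists_isBase_superset
  have : I.ncard ≤ B'.ncard := Set.ncard_le_ncard hIB' (hfin.subset hB'.subset_ground)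
  rwa [hB'.ncard_eq_ncard_of_isBase hB] at this

/-- Circuit-cocircuit orthogonality. -/
lemma circ_cocirc_orth {C D : Set α} {e : α} (hC : M.IsCircuit' C) (hD : M.IsCocircuit' D)
    (hCD : C ∩ D = {e}) : False := by
  have heCD : e ∈ C ∩ D := hCD.symm ▸ Set.mem_singleton e
  have heC : e ∈ C := heCD.1
  have heD : e ∈ D := heCD.2
  have hCe : M.Indep (C \ {e}) := circuit_ssubset_indep hC diff_subset
    (fun h => by rw [← h] at heC; exact heC.2 rfl)
  have hDe : M.Coindep (D \ {e}) := circuit_ssubset_indep hD diff_subset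
    (fun h => by rw [← h] at heD; exact heD.2 rfl)
  obtain ⟨B, hB, hBD⟩ := hDe.exists_isBase_subset_compl
  obtain ⟨B', hB', hCB', hB'sub⟩ := hCe.exists_isBase_subset_union_isBase hB
  have heB' : e ∉ B' := by
    intro he
    have hCB : C ⊆ B' := by
      intro x hx
      rcases eq_or_ne x e with rfl | hne
      · exact he
      · exact hCB' ⟨hx, hne⟩
    exact hC.1.1 (hB'.indep.subset hCB)
  have hDB' : D ⊆ M.E \ B' := by
    intro d hd
    refine ⟨hD.1.subset_ground hd, fun hdB' => ?_⟩
    rcases eq_or_ne d e with rfl | hne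
    · exact heB' hdB'
    · rcases hB'sub hdB' with h | h
      · have : d ∈ C ∩ D := ⟨h.1, hd⟩
        rw [hCD] at this
        exact hne this
      · exact (hBD h).2 ⟨hd, hne⟩
  exact hD.1.1 (hB'.compl_isBase_dual.indep.subset hDB')

section Spike

variable {s t m : ℕ} {A : Fin m → Set α}

lemma arm_finite (hA : M.IsSpike s t A) (i : Fin m) : (A i).Finite := by
  by_contra h
  have h2 : (A i).ncard = 0 := Set.Infinite.ncard h
  rw [hA.2.2.2.1 i] at h2
  omega

lemma arm_nonempty (hA : M.IsSpike s t A) (i : Fin m) : (A i).Nonempty :=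
  Set.nonempty_of_ncard_ne_zero (by rw [hA.2.2.2.1 i]; omega)

lemma mem_arm_unique (hA : M.IsSpike s t A) {x : α} {i j : Fin m}
    (hi : x ∈ A i) (hj : x ∈ A j) : i = j := by
  by_contra h
  exact Set.disjoint_left.mp (hA.2.2.1 h) hi hj

lemma AJ_finite (hA : M.IsSpike s t A) (J : Finset (Fin m)) : (⋃ j ∈ J, A j).Finite :=
  Set.Finite.biUnion J.finite_toSet (fun i _ => arm_finite hA i)

lemma AJ_subset_ground (hA : M.IsSpike s t A) (J : Finset (Fin m)) :
    (⋃ j ∈ J, A j) ⊆ M.E := by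
  rw [← hA.2.1]
  exact Set.iUnion₂_subset fun i _ => Set.subset_iUnion A i

lemma ground_finite (hA : M.IsSpike s t A) : M.E.Finite := by
  rw [← hA.2.1]
  exact Set.finite_iUnion (fun i => arm_finite hA i)

lemma ncard_AJ (hA : M.IsSpike s t A) (J : Finset (Fin m)) :
    (⋃ j ∈ J, A j).ncard = 2 * J.card := by
  classical
  induction J using Finset.induction with
  | empty => simp
  | @insert j J hj IH =>
    rw [Finset.set_biUnion_insert, Set.ncard_union_eq ?_ (arm_finite hA j) (AJ_finite hA J),
      hA.2.2.2.1 j, IH, Finset.card_insert_of_notMem hj]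
    · ring
    · rw [Set.disjoint_right]
      rintro x hx hxj
      obtain ⟨j', hj', hx'⟩ := Set.mem_iUnion₂.mp hx
      exact hj (by rwa [mem_arm_unique hA hxj hx'])

lemma ncard_eq_sum_inter (hA : M.IsSpike s t A) (J : Finset (Fin m)) (I : Set α)
    (hI : I ⊆ ⋃ j ∈ J, A j) : I.ncard = ∑ j ∈ J, (I ∩ A j).ncard := by
  classical
  induction J using Finset.induction generalizing I with
  | empty => simp only [Finset.notMem_empty, Set.iUnion_of_empty, Set.iUnion_empty,
      Set.subset_empty_iff] at hI; simp [hI]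
  | @insert j J hj IH =>
    have hIfin : I.Finite := (AJ_finite hA (insert j J)).subset hI
    have hd : I \ A j ⊆ ⋃ j' ∈ J, A j' := by
      rintro x ⟨hxI, hxj⟩
      obtain ⟨j', hj', hx'⟩ := Set.mem_iUnion₂.mp (hI hxI)
      rcases Finset.mem_insert.mp hj' with rfl | hmem
      · exact absurd hx' hxj
      · exact Set.mem_biUnion hmem hx'
    rw [Finset.sum_insert hj, ← Set.ncard_inter_add_ncard_diff_eq_ncard I (A j) hIfin]
    congr 1
    rw [IH _ hd]
    refine Finset.sum_congr rfl fun j' hj' => ?_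
    congr 1
    ext x
    simp only [Set.mem_inter_iff, Set.mem_diff]
    constructor
    · rintro ⟨⟨h1, _⟩, h2⟩; exact ⟨h1, h2⟩
    · rintro ⟨h1, h2⟩
      refine ⟨⟨h1, fun hxj => ?_⟩, h2⟩
      exact hj (by rw [mem_arm_unique hA hxj h2]; exact hj')

lemma indep_small (hA : M.IsSpike s t A) {J : Finset (Fin m)} (hJ : J.card < s) :
    M.Indep (⋃ j ∈ J, A j) := by
  classical
  have hsm : s ≤ m := le_trans (le_max_left s t) hA.1
  obtain ⟨J', hJJ', hJ'⟩ := Finset.exists_superset_card_eq (le_of_lt hJ)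
    (by simpa using hsm)
  have hC := hA.2.2.2.2.1 J' hJ'
  have hsub : (⋃ j ∈ J, A j) ⊆ ⋃ j ∈ J', A j :=
    Set.biUnion_subset_biUnion_left (by exact_mod_cast hJJ')
  refine circuit_ssubset_indep hC hsub (fun h => ?_)
  obtain ⟨j, hjJ', hjJ⟩ : ∃ j ∈ J', j ∉ J := by
    by_contra hcon
    push_neg at hcon
    have : J' ⊆ J := hcon
    have := Finset.card_le_card this
    omega
  obtain ⟨x, hx⟩ := arm_nonempty hA j
  have hxC : x ∈ ⋃ j ∈ J, A j := h ▸ Set.mem_biUnion hjJ' hx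
  obtain ⟨j', hj', hx'⟩ := Set.mem_iUnion₂.mp hxC
  exact hjJ (by rwa [mem_arm_unique hA hx hx'])

lemma dual_spike (hA : M.IsSpike s t A) : M✶.IsSpike t s A := by
  obtain ⟨h1, h2, h3, h4, h5, h6⟩ := hA
  refine ⟨by rwa [max_comm], by rwa [Matroid.dual_ground], h3, h4, h6, fun I hI => ?_⟩
  show M✶✶.IsCircuit' _
  rw [Matroid.dual_dual]
  exact h5 I hI

lemma upper_big (hA : M.IsSpike s t A) (hs : 0 < s) {J : Finset (Fin m)}
    {I : Set α} (hI : M.Indep I) (hIJ : I ⊆ ⋃ j ∈ J, A j) :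
    I.ncard ≤ s + J.card - 1 := by
  classical
  set F := J.filter (fun j => A j ⊆ I) with hF
  have hfull : F.card < s := by
    by_contra hcon
    push_neg at hcon
    obtain ⟨S, hSF, hS⟩ := Finset.exists_subset_card_eq hcon
    have hC := hA.2.2.2.2.1 S hS
    have hsub : (⋃ j ∈ S, A j) ⊆ I := by
      refine Set.iUnion₂_subset fun j hj => ?_
      exact (Finset.mem_filter.mp (hSF hj)).2
    exact hC.1.1 (hI.subset hsub)
  have hcount : I.ncard ≤ J.card + F.card := by
    rw [ncard_eq_sum_inter hA J I hIJ]
    have hbd : ∀ j ∈ J, (I ∩ A j).ncard ≤ 1 + (if A j ⊆ I then 1 else 0) := by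
      intro j hj
      by_cases hfull : A j ⊆ I
      · simp only [hfull, if_true]
        calc (I ∩ A j).ncard ≤ (A j).ncard :=
              Set.ncard_le_ncard Set.inter_subset_right (arm_finite hA j)
          _ = 2 := hA.2.2.2.1 j
      · simp only [hfull, if_false]
        have hss : I ∩ A j ⊂ A j := by
          refine ⟨Set.inter_subset_right, fun hsub => ?_⟩
          exact hfull (fun x hx => (hsub hx).1)
        have := Set.ncard_lt_ncard hss (arm_finite hA j)
        rw [hA.2.2.2.1 j] at this
        omega
    calc ∑ j ∈ J, (I ∩ A j).ncard ≤ ∑ j ∈ J, (1 + if A j ⊆ I then 1 else 0) :=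
          Finset.sum_le_sum hbd
      _ = J.card + F.card := by
          rw [Finset.sum_add_distrib, Finset.sum_const, smul_eq_mul, mul_one,
            ← Finset.card_filter]
  omega

end Spike

end SpikeAux

namespace SpikeAux

open Matroid Set Function

variable {α : Type*} {M : Matroid α}

section Spike2

variable {s t m : ℕ} {A : Fin m → Set α}

lemma compl_AJ (hA : M.IsSpike s t A) (J : Finset (Fin m)) :
    M.E \ (⋃ j ∈ J, A j) = ⋃ j ∈ (Finset.univ \ J), A j := by
  classical
  ext x
  simp only [Set.mem_diff, Set.mem_iUnion, exists_prop, Finset.mem_sdiff, Finset.mem_univ,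
    true_and]
  constructor
  · rintro ⟨hxE, hx⟩
    rw [← hA.2.1] at hxE
    obtain ⟨i, hi⟩ := Set.mem_iUnion.mp hxE
    exact ⟨i, fun hiJ => hx ⟨i, hiJ, hi⟩, hi⟩
  · rintro ⟨i, hiJ, hi⟩
    refine ⟨hA.2.1 ▸ Set.mem_iUnion.mpr ⟨i, hi⟩, ?_⟩
    rintro ⟨i', hi', hx'⟩
    exact hiJ (by rw [mem_arm_unique hA hi hx']; exact hi')

lemma base_subset_of_big (hA : M.IsSpike s t A) {J : Finset (Fin m)}
    (hJ : m + 1 ≤ J.card + t) : ∃ B, M.IsBase B ∧ B ⊆ ⋃ j ∈ J, A j := by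
  classical
  have htm : t ≤ m := le_trans (le_max_right s t) hA.1
  have h1 : J.card ≤ m := by simpa using Finset.card_le_card (Finset.subset_univ J)
  have hcompl : (Finset.univ \ J).card < t := by
    have h2 : (Finset.univ \ J).card = m - J.card := by
      rw [Finset.card_sdiff_of_subset (Finset.subset_univ J)]; simp
    omega
  have hco : M.Coindep (⋃ j ∈ Finset.univ \ J, A j) := indep_small (dual_spike hA) hcompl
  obtain ⟨B, hB, hBsub⟩ := hco.exists_isBase_subset_compl
  refine ⟨B, hB, ?_⟩
  rw [← compl_AJ hA J] at hBsub
  intro x hx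
  have h3 := hBsub hx
  by_contra hxA
  exact h3.2 ⟨h3.1, hxA⟩

lemma rk'_eq_base_ncard (hA : M.IsSpike s t A) {J : Finset (Fin m)}
    (hJ : m + 1 ≤ J.card + t) {B : Set α} (hB : M.IsBase B) :
    M.rk' (⋃ j ∈ J, A j) = B.ncard := by
  obtain ⟨B0, hB0, hB0sub⟩ := base_subset_of_big hA hJ
  rw [rk'_eq_of hB0.indep hB0sub (fun I' hI' _ => indep_ncard_le_base (ground_finite hA) hI' hB0)]
  exact hB0.ncard_eq_ncard_of_isBase hB

lemma rk'_small (hA : M.IsSpike s t A) {J : Finset (Fin m)} (hJ : J.card < s) :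
    M.rk' (⋃ j ∈ J, A j) = 2 * J.card := by
  rw [← ncard_AJ hA J]
  exact rk'_eq_of (indep_small hA hJ) subset_rfl
    (fun I' _ hsub => Set.ncard_le_ncard hsub (AJ_finite hA J))

lemma exists_indep_big (hA : M.IsSpike s t A) (hs : 0 < s) (ht : 0 < t) {J : Finset (Fin m)}
    (hsJ : s ≤ J.card) (hJt : J.card + t ≤ m + 1) :
    ∃ X, M.Indep X ∧ X ⊆ (⋃ j ∈ J, A j) ∧ X.ncard = s + J.card - 1 := by
  classical
  have hsm : s ≤ m := le_trans (le_max_left s t) hA.1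
  have htm : t ≤ m := le_trans (le_max_right s t) hA.1
  have hJm : J.card ≤ m := by simpa using Finset.card_le_card (Finset.subset_univ J)
  obtain ⟨K, hKJ, hK⟩ := Finset.exists_subset_card_eq (show s - 1 ≤ J.card by omega)
  choose f hf using arm_nonempty hA
  set X := (⋃ j ∈ K, A j) ∪ (f '' ((J \ K : Finset (Fin m)) : Set (Fin m))) with hX
  have hXsub : X ⊆ ⋃ j ∈ J, A j := by
    rintro x (hx | ⟨j, hj, rfl⟩)
    · obtain ⟨k, hk, hxk⟩ := Set.mem_iUnion₂.mp hx
      exact Set.mem_biUnion (hKJ hk) hxk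
    · rw [Finset.coe_sdiff] at hj
      exact Set.mem_biUnion hj.1 (hf j)
  have hinj : Set.InjOn f ((J \ K : Finset (Fin m)) : Set (Fin m)) := by
    intro a _ b _ hab
    exact mem_arm_unique hA (hf a) (hab ▸ hf b)
  have hdisj : Disjoint (⋃ j ∈ K, A j) (f '' ((J \ K : Finset (Fin m)) : Set (Fin m))) := by
    rw [Set.disjoint_right]
    rintro x ⟨j, hj, rfl⟩ hx
    obtain ⟨k, hk, hxk⟩ := Set.mem_iUnion₂.mp hx
    rw [Finset.mem_coe, Finset.mem_sdiff] at hj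
    exact hj.2 (by rw [mem_arm_unique hA (hf j) hxk]; exact hk)
  have hcard : X.ncard = s + J.card - 1 := by
    rw [hX, Set.ncard_union_eq hdisj (AJ_finite hA K)
      (((J \ K).finite_toSet).image f), ncard_AJ hA K, hK,
      Set.ncard_image_of_injOn hinj, Set.ncard_coe_finset,
      Finset.card_sdiff_of_subset hKJ, hK]
    omega
  refine ⟨X, ?_, hXsub, hcard⟩
  have hXE : X ⊆ M.E := hXsub.trans (AJ_subset_ground hA J)
  rw [← not_dep_iff hXE]
  intro hdep
  obtain ⟨C, hCX, hC⟩ := exists_circuit_of_dep ((AJ_finite hA J).subset hXsub) hdep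
  have hCK : C ⊆ ⋃ j ∈ K, A j := by
    intro x hxC
    rcases hCX hxC with hx | hximg
    · exact hx
    exfalso
    obtain ⟨j, hj, rfl⟩ := hximg
    rw [Finset.mem_coe, Finset.mem_sdiff] at hj
    obtain ⟨T, hTsub, hT⟩ := Finset.exists_subset_card_eq
      (show t - 1 ≤ (Finset.univ \ J).card by
        rw [Finset.card_sdiff_of_subset (Finset.subset_univ J)]; simp; omega)
    have hjT : j ∉ T := fun hjT => ((Finset.mem_sdiff.mp (hTsub hjT)).2) hj.1
    have hS'card : (insert j T).card = t := by
      rw [Finset.card_insert_of_notMem hjT, hT]; omega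
    have hD := hA.2.2.2.2.2 (insert j T) hS'card
    refine circ_cocirc_orth hC hD (e := f j) ?_
    ext y
    simp only [Set.mem_inter_iff, Set.mem_singleton_iff]
    constructor
    · rintro ⟨hyC, hyD⟩
      obtain ⟨i, hiS', hyi⟩ := Set.mem_iUnion₂.mp hyD
      rcases hCX hyC with hy | ⟨j', hj', rfl⟩
      · exfalso
        obtain ⟨k, hk, hyk⟩ := Set.mem_iUnion₂.mp hy
        have hik : i = k := mem_arm_unique hA hyi hyk
        rcases Finset.mem_insert.mp hiS' with rfl | hiT
        · exact hj.2 (hik ▸ hk)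
        · exact (Finset.mem_sdiff.mp (hTsub hiT)).2 (by rw [hik]; exact hKJ hk)
      · rw [Finset.mem_coe, Finset.mem_sdiff] at hj'
        have hij' : i = j' := mem_arm_unique hA hyi (hf j')
        rcases Finset.mem_insert.mp hiS' with rfl | hiT
        · rw [← hij']
        · exact absurd (hij' ▸ hj'.1) (Finset.mem_sdiff.mp (hTsub hiT)).2
    · rintro rfl
      exact ⟨hxC, Set.mem_biUnion (Finset.mem_insert_self j T) (hf j)⟩
  exact hC.1.1 ((indep_small hA (show K.card < s by omega)).subset hCK)

lemma rk'_mid (hA : M.IsSpike s t A) (hs : 0 < s) (ht : 0 < t) {J : Finset (Fin m)}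
    (hsJ : s ≤ J.card) (hJt : J.card + t ≤ m + 1) :
    M.rk' (⋃ j ∈ J, A j) = s + J.card - 1 := by
  obtain ⟨X, hX, hXsub, hXcard⟩ := exists_indep_big hA hs ht hsJ hJt
  rw [rk'_eq_of hX hXsub
    (fun I' hI' hsub => by rw [hXcard]; exact upper_big hA hs hI' hsub), hXcard]

end Spike2

end SpikeAux


open SpikeAux

universe u

open Matroid

/-- For an `(s,t)`-spike with associated partition `(A 1, …, A m)` and
`J ⊆ [m]`, the rank of `A_J = ⋃_{j ∈ J} A j` is `2|J|` if `|J| < s`, is `s + |J| − 1` if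
`s ≤ |J| ≤ m − t + 1`, and is `m + s − t` if `|J| ≥ m − t + 1`. -/
theorem statement15 {α : Type u} (s t m : ℕ) (hs : 0 < s) (ht : 0 < t)
    (M : Matroid α) (A : Fin m → Set α) (hA : M.IsSpike s t A)
    (J : Finset (Fin m)) :
    (J.card < s → M.rk' (⋃ j ∈ J, A j) = 2 * J.card) ∧
    (s ≤ J.card → J.card ≤ m - t + 1 → M.rk' (⋃ j ∈ J, A j) = s + J.card - 1) ∧
    (m - t + 1 ≤ J.card → M.rk' (⋃ j ∈ J, A j) = m + s - t) := by
    classical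
  have hsm : s ≤ m := le_trans (le_max_left s t) hA.1
  have htm : t ≤ m := le_trans (le_max_right s t) hA.1
  have hJm : J.card ≤ m := by simpa using Finset.card_le_card (Finset.subset_univ J)
  obtain ⟨J0, hJ0⟩ : ∃ J0 : Finset (Fin m), J0.card = m - t + 1 := by
    obtain ⟨J0, _, h⟩ := Finset.exists_subset_card_eq
      (show m - t + 1 ≤ (Finset.univ : Finset (Fin m)).card by simp; omega)
    exact ⟨J0, h⟩
  by_cases hdeg : m + 1 < s + t
  · exfalso
    have hJ0s : J0.card < s := by omega
    have hind := indep_small hA hJ0s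
    obtain ⟨B, hB, hBsub⟩ := base_subset_of_big hA (show m + 1 ≤ J0.card + t by omega)
    have hBA : B = ⋃ j ∈ J0, A j := hB.eq_of_subset_indep hind hBsub
    have hBcard : B.ncard = 2 * (m - t + 1) := by rw [hBA, ncard_AJ hA, hJ0]
    obtain ⟨J1, hJ01, hJ1⟩ := Finset.exists_superset_card_eq (s := J0) (n := m - t + 2)
      (by omega) (by simp; omega)
    by_cases h1 : J1.card < s
    · have hle := indep_ncard_le_base (ground_finite hA) (indep_small hA h1) hB
      rw [ncard_AJ hA J1, hJ1, hBcard] at hle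
      omega
    · have hJ1s : J1.card = s := by omega
      have hC := hA.2.2.2.2.1 J1 hJ1s
      obtain ⟨j1, hj1⟩ : J1.Nonempty := by rw [← Finset.card_pos]; omega
      obtain ⟨x, hx⟩ := arm_nonempty hA j1
      have hxC : x ∈ ⋃ j ∈ J1, A j := Set.mem_biUnion hj1 hx
      have hind2 : M.Indep ((⋃ j ∈ J1, A j) \ {x}) := circuit_ssubset_indep hC
        Set.diff_subset (fun h => by rw [← h] at hxC; exact hxC.2 rfl)
      have hle := indep_ncard_le_base (ground_finite hA) hind2 hB
      have hcd : ((⋃ j ∈ J1, A j) \ {x}).ncard = 2 * J1.card - 1 := by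
        rw [Set.ncard_diff_singleton_of_mem hxC, ncard_AJ hA]
      rw [hcd, hJ1, hBcard] at hle
      omega
  · refine ⟨fun h => rk'_small hA h, fun h1 h2 => rk'_mid hA hs ht h1 (by omega),
      fun h3 => ?_⟩
    obtain ⟨B, hB, -⟩ := base_subset_of_big hA (show m + 1 ≤ J0.card + t by omega)
    have hr0 : M.rk' (⋃ j ∈ J0, A j) = s + J0.card - 1 :=
      rk'_mid hA hs ht (by omega) (by omega)
    have hr0' : M.rk' (⋃ j ∈ J0, A j) = B.ncard :=
      rk'_eq_base_ncard hA (by omega) hB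
    have hr : M.rk' (⋃ j ∈ J, A j) = B.ncard :=
      rk'_eq_base_ncard hA (by omega) hB
    rw [hr, ← hr0', hr0, hJ0]
    omega
end

section
/- Let s and t be positive integers, let M be an (s,t)-spike of order m ≥ 3·max{s,t} − 2, and let X ⊆ E(M) with |X| ≤ 2·min{s,t} − 1. Then λ(X) = |X|. -/
open Set Function

universe u

open Matroid

namespace SpikeAux

variable {α : Type u} {M : Matroid α} {C K D X : Set α} {e : α}

lemma circuit_ssubset_indep_s17 (hC : M.IsCircuit' C) (hDC : D ⊆ C) (hne : D ≠ C) :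
    M.Indep D := by
  have hDE : D ⊆ M.E := hDC.trans hC.prop.subset_ground
  by_contra h
  have hD : M.Dep D := (M.not_indep_iff hDE).mp h
  exact hne (hDC.antisymm (hC.2 hD hDC))

lemma circuit_mem_closure (hC : M.IsCircuit' C) (he : e ∈ C) :
    e ∈ M.closure (C \ {e}) := by
  have hI : M.Indep (C \ {e}) := circuit_ssubset_indep_s17 hC diff_subset (by
    intro h
    have he' : e ∈ C \ {e} := by rw [h]; exact he
    exact he'.2 rfl)
  rw [hI.mem_closure_iff]
  left
  rw [insert_diff_singleton, insert_eq_of_mem he]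
  exact hC.prop

lemma circuit_cocircuit_inter_ne_singleton (hC : M.IsCircuit' C) (hK : M.IsCocircuit' K)
    (e : α) : C ∩ K ≠ {e} := by
  intro h
  have he : e ∈ C ∩ K := by rw [h]; rfl
  have hKE : K ⊆ M.E := hK.prop.subset_ground
  have hKdep : ¬ M✶.Indep K := hK.prop.not_indep
  have hsp1 : M.Spanning (M.E \ (K \ {e})) := by
    have hco : M.Coindep (K \ {e}) := coindep_def.mpr
      (circuit_ssubset_indep_s17 hK diff_subset (by
        intro hh
        have he' : e ∈ K \ {e} := by rw [hh]; exact he.2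
        exact he'.2 rfl))
    exact hco.compl_spanning
  have hnsp : ¬ M.Spanning (M.E \ K) := by
    intro hsp
    exact hKdep (coindep_def.mp ((M.coindep_iff_compl_spanning hKE).mpr hsp))
  have hCsub : C \ {e} ⊆ M.E \ K := by
    rintro x ⟨hxC, hxe⟩
    refine ⟨hC.prop.subset_ground hxC, fun hxK => hxe ?_⟩
    have : x ∈ C ∩ K := ⟨hxC, hxK⟩
    rw [h] at this
    exact this
  have heM : e ∈ M.closure (M.E \ K) := M.closure_mono hCsub (circuit_mem_closure hC he.1)
  have hset : M.E \ (K \ {e}) = insert e (M.E \ K) := by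
    rw [diff_diff_right, Set.inter_eq_self_of_subset_right
      (singleton_subset_iff.mpr (hKE he.2)), union_singleton]
  rw [hset, spanning_iff_closure_eq (insert_subset (hKE he.2) diff_subset),
    closure_insert_eq_of_mem_closure heM] at hsp1
  exact hnsp ((M.spanning_iff_closure_eq diff_subset).mpr hsp1)

lemma exists_circuit_subset (M : Matroid α) :
    ∀ n (D : Set α), D.Finite → D.ncard ≤ n → M.Dep D → ∃ C, C ⊆ D ∧ M.IsCircuit' C := by
  intro n
  induction n with
  | zero =>
    intro D hfin hcard hD
    have hD0 : D = ∅ := by rw [← Set.ncard_eq_zero hfin]; omega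
    exact absurd M.empty_indep (hD0 ▸ hD).not_indep
  | succ n ih =>
    intro D hfin hcard hD
    by_cases hmin : Minimal M.Dep D
    · exact ⟨D, subset_rfl, hmin⟩
    · have hex : ∃ D', M.Dep D' ∧ D' ⊆ D ∧ ¬ D ⊆ D' := by
        by_contra hcon
        push_neg at hcon
        exact hmin ⟨hD, fun y hy hle => hcon y hy hle⟩
      obtain ⟨D', hD', hsub, hnss⟩ := hex
      have hss : D' ⊂ D := hsub.ssubset_of_ne (fun hh => hnss (hh ▸ subset_rfl))
      have hlt : D'.ncard < D.ncard := Set.ncard_lt_ncard hss hfin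
      obtain ⟨C, hCD, hC⟩ := ih D' (hfin.subset hsub) (by omega) hD'
      exact ⟨C, hCD.trans hsub, hC⟩

lemma arms_finite {m : ℕ} {A : Fin m → Set α} (hcard : ∀ i, (A i).ncard = 2) (i : Fin m) :
    (A i).Finite := by
  by_contra h
  have h2 := hcard i
  rw [Set.Infinite.ncard h] at h2
  omega

lemma ncard_arms {m : ℕ} {A : Fin m → Set α} (hdisj : Pairwise (Function.onFun Disjoint A))
    (hcard : ∀ i, (A i).ncard = 2) (I : Finset (Fin m)) :
    (⋃ i ∈ I, A i).ncard = 2 * I.card := by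
  classical
  induction I using Finset.induction with
  | empty => simp
  | @insert i I hiI ih =>
    rw [Finset.set_biUnion_insert]
    have hdisj' : Disjoint (A i) (⋃ j ∈ I, A j) := by
      rw [Set.disjoint_left]
      intro x hx hx'
      obtain ⟨j, hjI, hxj⟩ := mem_iUnion₂.mp hx'
      have hij : i ≠ j := fun hh => hiI (hh ▸ hjI)
      exact Set.disjoint_left.mp (hdisj hij) hx hxj
    have hfinU : (⋃ j ∈ I, A j).Finite :=
      Set.Finite.biUnion I.finite_toSet (fun j _ => arms_finite hcard j)
    rw [Set.ncard_union_eq hdisj' (arms_finite hcard i) hfinU, hcard i, ih,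
      Finset.card_insert_of_notMem hiI]
    ring

lemma spike_indep {s t m : ℕ} {A : Fin m → Set α}
    (hA : M.IsSpike s t A) (hs : 0 < s) (ht : 0 < t) (hm : 2 * s + t - 2 ≤ m)
    (hX : X ⊆ M.E) (hXcard : X.ncard ≤ 2 * s - 1) : M.Indep X := by
  classical
  obtain ⟨hmax, hE, hdisj, hcard, hcirc, hcocirc⟩ := hA
  have hfinA : ∀ i, (A i).Finite := arms_finite hcard
  have hEfin : M.E.Finite := by rw [← hE]; exact Set.finite_iUnion hfinA
  have hXfin : X.Finite := hEfin.subset hX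
  by_contra hnind
  have hXdep : M.Dep X := (M.not_indep_iff hX).mp hnind
  obtain ⟨C, hCX, hC⟩ := exists_circuit_subset M X.ncard X hXfin le_rfl hXdep
  have hCfin : C.Finite := hXfin.subset hCX
  have hCcard : C.ncard ≤ 2 * s - 1 := le_trans (Set.ncard_le_ncard hCX hXfin) hXcard
  have hCE : C ⊆ M.E := hC.prop.subset_ground
  set J : Finset (Fin m) := Finset.univ.filter (fun i => (C ∩ A i).Nonempty) with hJdef
  have hmemJ : ∀ i, i ∈ J ↔ (C ∩ A i).Nonempty := by
    intro i; simp [hJdef]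
  -- |J| ≤ |C|
  obtain ⟨c0, hc0⟩ := hC.prop.nonempty
  set f : Fin m → α := fun i => if h : (C ∩ A i).Nonempty then h.choose else c0 with hfdef
  have hfmemC : ∀ i, (C ∩ A i).Nonempty → f i ∈ C ∩ A i := by
    intro i hi
    simp only [hfdef, dif_pos hi]
    exact hi.choose_spec
  have hJle : J.card ≤ C.ncard := by
    rw [← Set.ncard_coe_finset]
    refine Set.ncard_le_ncard_of_injOn f (fun i hi => (hfmemC i ((hmemJ i).mp hi)).1)
      (fun i hi j hj hij => ?_) hCfin
    by_contra hne
    have h1 := (hfmemC i ((hmemJ i).mp hi)).2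
    have h2 := (hfmemC j ((hmemJ j).mp hj)).2
    exact Set.disjoint_left.mp (hdisj hne) h1 (hij ▸ h2)
  -- each arm meets C in 0 or 2 elements
  have harm : ∀ i, (C ∩ A i).ncard ≠ 1 := by
    intro i h1
    obtain ⟨e, he⟩ := Set.ncard_eq_one.mp h1
    have hiJ : i ∈ J := (hmemJ i).mpr ⟨e, by rw [he]; rfl⟩
    have hJcard : J.card ≤ 2 * s - 1 := le_trans hJle hCcard
    have hsplit : J.card + (Jᶜ : Finset (Fin m)).card = m := by
      rw [Finset.card_add_card_compl, Fintype.card_fin]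
    have hout : t - 1 ≤ (Jᶜ : Finset (Fin m)).card := by omega
    obtain ⟨K, hKsub, hKcard⟩ := Finset.exists_subset_card_eq hout
    have hiK : i ∉ K := fun hh => (Finset.mem_compl.mp (hKsub hh)) hiJ
    have hIcard : (insert i K).card = t := by
      rw [Finset.card_insert_of_notMem hiK, hKcard]
      omega
    have hK := hcocirc (insert i K) hIcard
    apply circuit_cocircuit_inter_ne_singleton hC hK e
    apply Set.Subset.antisymm
    · rintro x ⟨hxC, hxU⟩
      obtain ⟨j, hjI, hxj⟩ := mem_iUnion₂.mp hxU
      rcases Finset.mem_insert.mp hjI with rfl | hjK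
      · rw [← he]; exact ⟨hxC, hxj⟩
      · exact absurd ((hmemJ j).mpr ⟨x, hxC, hxj⟩) (Finset.mem_compl.mp (hKsub hjK))
    · intro x hx
      rw [Set.mem_singleton_iff] at hx
      have heAi : e ∈ C ∩ A i := by rw [he]; rfl
      rw [hx]
      exact ⟨heAi.1, mem_iUnion₂.mpr ⟨i, Finset.mem_insert_self i K, heAi.2⟩⟩
  have harm2 : ∀ i ∈ J, C ∩ A i = A i := by
    intro i hi
    have hne : (C ∩ A i).Nonempty := (hmemJ i).mp hi
    have hsub : C ∩ A i ⊆ A i := Set.inter_subset_right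
    have hfin' : (C ∩ A i).Finite := (hfinA i).subset hsub
    have hle : (C ∩ A i).ncard ≤ 2 := by
      rw [← hcard i]; exact Set.ncard_le_ncard hsub (hfinA i)
    have hpos : 0 < (C ∩ A i).ncard := (Set.ncard_pos hfin').mpr hne
    have hne1 := harm i
    exact Set.eq_of_subset_of_ncard_le hsub (by rw [hcard i]; omega) (hfinA i)
  have hCeq : C = ⋃ i ∈ J, A i := by
    apply Set.Subset.antisymm
    · intro x hx
      have hxE : x ∈ ⋃ i, A i := by rw [hE]; exact hCE hx
      obtain ⟨i, hxi⟩ := mem_iUnion.mp hxE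
      exact mem_iUnion₂.mpr ⟨i, (hmemJ i).mpr ⟨x, hx, hxi⟩, hxi⟩
    · intro x hx
      obtain ⟨i, hiJ, hxi⟩ := mem_iUnion₂.mp hx
      rw [← harm2 i hiJ] at hxi
      exact hxi.1
  have hC2 : C.ncard = 2 * J.card := by rw [hCeq]; exact ncard_arms hdisj hcard J
  have hJlt : J.card ≤ s := by omega
  have hsm : s ≤ m := le_trans (le_max_left s t) hmax
  obtain ⟨Is, hJIs, _, hIscard⟩ := Finset.exists_subsuperset_card_eq (Finset.subset_univ J)
    hJlt (by rw [Finset.card_univ, Fintype.card_fin]; exact hsm)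
  have hC' := hcirc Is hIscard
  have hsubC' : C ⊆ ⋃ i ∈ Is, A i := by
    intro x hx
    rw [hCeq] at hx
    obtain ⟨i, hiJ, hxi⟩ := mem_iUnion₂.mp hx
    exact mem_iUnion₂.mpr ⟨i, hJIs hiJ, hxi⟩
  have heq : C = ⋃ i ∈ Is, A i := Set.Subset.antisymm hsubC' (hC'.2 hC.prop hsubC')
  have hC3 : C.ncard = 2 * s := by
    rw [heq, ncard_arms hdisj hcard Is, hIscard]
  omega

lemma spike_dual {s t m : ℕ} {A : Fin m → Set α} (hA : M.IsSpike s t A) :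
    M✶.IsSpike t s A := by
  obtain ⟨hmax, hE, hdisj, hcard, hcirc, hcocirc⟩ := hA
  refine ⟨by rwa [max_comm], by rwa [dual_ground], hdisj, hcard,
    fun I hI => hcocirc I hI, fun I hI => ?_⟩
  show M✶✶.IsCircuit' _
  rw [dual_dual]
  exact hcirc I hI

lemma rk'_eq_of_indep (hEfin : M.E.Finite) (hX : M.Indep X) :
    M.rk' X = X.ncard := by
  have hXfin : X.Finite := hEfin.subset hX.subset_ground
  have hub : ∀ n ∈ {n : ℕ | ∃ I, M.Indep I ∧ I ⊆ X ∧ I.ncard = n}, n ≤ X.ncard := by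
    rintro n ⟨I, _, hIX, rfl⟩
    exact Set.ncard_le_ncard hIX hXfin
  apply le_antisymm
  · exact csSup_le ⟨0, ∅, M.empty_indep, empty_subset X, by simp⟩ hub
  · exact le_csSup ⟨X.ncard, hub⟩ ⟨X, hX, subset_rfl, rfl⟩

lemma rk'_eq_of_base_subset (hEfin : M.E.Finite) {B Y : Set α}
    (hB : M.IsBase B) (hBY : B ⊆ Y) : M.rk' Y = B.ncard := by
  have hub : ∀ n ∈ {n : ℕ | ∃ I, M.Indep I ∧ I ⊆ Y ∧ I.ncard = n}, n ≤ B.ncard := by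
    rintro n ⟨I, hI, _, rfl⟩
    obtain ⟨B', hB', hIB'⟩ := indep_iff.mp hI
    calc I.ncard ≤ B'.ncard := Set.ncard_le_ncard hIB' (hEfin.subset hB'.subset_ground)
    _ = B.ncard := hB'.ncard_eq_ncard_of_isBase hB
  apply le_antisymm
  · exact csSup_le ⟨0, ∅, M.empty_indep, empty_subset Y, by simp⟩ hub
  · exact le_csSup ⟨B.ncard, hub⟩ ⟨B, hB.indep, hBY, rfl⟩

end SpikeAux

open SpikeAux

/-- If `M` is an `(s,t)`-spike of order `m ≥ 3·max{s,t} − 2` and `X ⊆ E(M)`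
with `|X| ≤ 2·min{s,t} − 1`, then `λ(X) = |X|`. -/
theorem statement17 {α : Type u} (s t m : ℕ) (hs : 0 < s) (ht : 0 < t)
    (M : Matroid α) (A : Fin m → Set α) (hA : M.IsSpike s t A)
    (hm : 3 * max s t - 2 ≤ m)
    (X : Set α) (hX : X ⊆ M.E) (hXcard : X.ncard ≤ 2 * min s t - 1) :
    M.lam' X = X.ncard := by
  have hEfin : M.E.Finite := by
    rw [← hA.2.1]
    exact Set.finite_iUnion (arms_finite hA.2.2.2.1)
  have h1 : s ≤ max s t := le_max_left s t
  have h2 : t ≤ max s t := le_max_right s t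
  have h3 : min s t ≤ s := min_le_left s t
  have h4 : min s t ≤ t := min_le_right s t
  have hmx := max_choice s t
  have hsm : 2 * s + t - 2 ≤ m := by rcases hmx with h | h <;> omega
  have htm : 2 * t + s - 2 ≤ m := by rcases hmx with h | h <;> omega
  have hXs : X.ncard ≤ 2 * s - 1 := by omega
  have hXt : X.ncard ≤ 2 * t - 1 := by omega
  have hind : M.Indep X := spike_indep hA hs ht hsm hX hXs
  have hcoind : M.Coindep X := coindep_def.mpr
    (spike_indep (spike_dual hA) ht hs htm (by rwa [dual_ground]) hXt)
  obtain ⟨B, hB, hBsub⟩ := hcoind.compl_spanning.exists_isBase_subset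
  show M.rk' X + M.rk' (M.E \ X) - M.rk' M.E = X.ncard
  rw [rk'_eq_of_indep hEfin hind, rk'_eq_of_base_subset hEfin hB hBsub,
    rk'_eq_of_base_subset hEfin hB hB.subset_ground]
  omega
end
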